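/- For p ≥ 3, the dual mutual-visibility number of the Sierpiński graph S_p^2 equals p, and there are exactly p + 1 maximum dual mutual-visibility sets, namely the p vertex sets of the subgraphs iS_p^1 = {(i,j) : j ∈ [p]_0} and the diagonal {(i,i) : i ∈ [p]_0}. -/

import Mathlib

open SimpleGraph

/-- A walk is a shortest path: it is a path whose length equals the graph distance. -/
def IsShortest {V : Type*} (G : SimpleGraph V) {u v : V} (p : G.Walk u v) : Prop :=
  p.IsPath ∧ p.length = G.dist u v

/-- `u` and `v` are `X`-visible: some shortest `u,v`-path meets `X` only in `{u,v}`. -/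
def Visible {V : Type*} (G : SimpleGraph V) (X : Set V) (u v : V) : Prop :=
  ∃ p : G.Walk u v, IsShortest G p ∧ ∀ w ∈ p.support, w ∈ X → w = u ∨ w = v

/-- `u` and `v` are `X`-positionable: every shortest `u,v`-path meets `X` only in `{u,v}`. -/
def Positionable {V : Type*} (G : SimpleGraph V) (X : Set V) (u v : V) : Prop :=
  ∀ p : G.Walk u v, IsShortest G p → ∀ w ∈ p.support, w ∈ X → w = u ∨ w = v

def MutualVisibilitySet {V : Type*} (G : SimpleGraph V) (X : Set V) : Prop :=
  ∀ u ∈ X, ∀ v ∈ X, Visible G X u v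

def TotalMVSet {V : Type*} (G : SimpleGraph V) (X : Set V) : Prop :=
  ∀ u v : V, Visible G X u v

def OuterMVSet {V : Type*} (G : SimpleGraph V) (X : Set V) : Prop :=
  MutualVisibilitySet G X ∧ ∀ u ∈ X, ∀ v ∉ X, Visible G X u v

def DualMVSet {V : Type*} (G : SimpleGraph V) (X : Set V) : Prop :=
  MutualVisibilitySet G X ∧ ∀ u ∉ X, ∀ v ∉ X, Visible G X u v

def GeneralPositionSet {V : Type*} (G : SimpleGraph V) (X : Set V) : Prop :=
  ∀ u ∈ X, ∀ v ∈ X, Positionable G X u v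

def TotalGPSet {V : Type*} (G : SimpleGraph V) (X : Set V) : Prop :=
  ∀ u v : V, Positionable G X u v

def OuterGPSet {V : Type*} (G : SimpleGraph V) (X : Set V) : Prop :=
  GeneralPositionSet G X ∧ ∀ u ∈ X, ∀ v ∉ X, Positionable G X u v

def DualGPSet {V : Type*} (G : SimpleGraph V) (X : Set V) : Prop :=
  GeneralPositionSet G X ∧ ∀ u ∉ X, ∀ v ∉ X, Positionable G X u v

/-- The maximum cardinality of a set of vertices satisfying `P`. -/
noncomputable def maxCard {V : Type*} (P : Set V → Prop) : ℕ :=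
  sSup {n : ℕ | ∃ X : Set V, P X ∧ X.ncard = n}

/-- The number of sets achieving `maxCard P`. -/
noncomputable def numMaxSets {V : Type*} (P : Set V → Prop) : ℕ :=
  {X : Set V | P X ∧ X.ncard = maxCard P}.ncard

/-- A vertex is simplicial if its neighborhood induces a complete graph. -/
def Simplicial {V : Type*} (G : SimpleGraph V) (v : V) : Prop :=
  ∀ u w : V, G.Adj v u → G.Adj v w → u ≠ w → G.Adj u w

/-- A set of vertices is convex: every shortest path between its vertices stays inside it. -/
def ConvexSet {V : Type*} (G : SimpleGraph V) (S : Set V) : Prop :=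
  ∀ u ∈ S, ∀ v ∈ S, ∀ p : G.Walk u v, IsShortest G p → ∀ w ∈ p.support, w ∈ S

/-- The Sierpiński graph `S_p^2` on vertex set `[p]_0 × [p]_0`:
`(i,j) ~ (i,j')` for `j ≠ j'`, and `(i,j) ~ (j,i)` for `i ≠ j`. -/
def SP2 (p : ℕ) : SimpleGraph (Fin p × Fin p) where
  Adj u v := (u.1 = v.1 ∧ u.2 ≠ v.2) ∨ (v.1 = u.2 ∧ v.2 = u.1 ∧ u.1 ≠ u.2)
  symm := ⟨by
    rintro ⟨a, b⟩ ⟨c, d⟩ (⟨h1, h2⟩ | ⟨h1, h2, h3⟩) <;> simp_all <;> tauto⟩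
  loopless := ⟨by
    rintro ⟨a, b⟩ (⟨h1, h2⟩ | ⟨h1, h2, h3⟩) <;> simp_all⟩

section Aux

open SimpleGraph

variable {V : Type*} {G : SimpleGraph V} {X : Set V} {u v : V}

lemma walk_len2 (q : G.Walk u v) (h : q.length = 2) :
    ∃ w, G.Adj u w ∧ G.Adj w v ∧ q.support = [u, w, v] := by
  cases q with
  | nil => simp at h
  | cons h1 q => cases q with
    | nil => simp at h
    | cons h2 q => cases q with
      | nil => exact ⟨_, h1, h2, by simp⟩
      | cons h3 q => simp [SimpleGraph.Walk.length_cons] at h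

lemma walk_len3 (q : G.Walk u v) (h : q.length = 3) :
    ∃ w1 w2, G.Adj u w1 ∧ G.Adj w1 w2 ∧ G.Adj w2 v ∧ q.support = [u, w1, w2, v] := by
  cases q with
  | nil => simp at h
  | cons h1 q => cases q with
    | nil => simp at h
    | cons h2 q => cases q with
      | nil => simp at h
      | cons h3 q => cases q with
        | nil => exact ⟨_, _, h1, h2, h3, by simp⟩
        | cons h4 q => simp [SimpleGraph.Walk.length_cons] at h

lemma dist_eq_two' {w : V} (hne : u ≠ v) (hnadj : ¬ G.Adj u v)
    (h1 : G.Adj u w) (h2 : G.Adj w v) : G.dist u v = 2 := by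
  have hle := SimpleGraph.dist_le (SimpleGraph.Walk.cons h1 (SimpleGraph.Walk.cons h2 SimpleGraph.Walk.nil))
  simp only [SimpleGraph.Walk.length_cons, SimpleGraph.Walk.length_nil] at hle
  have h0 : G.dist u v ≠ 0 := by
    rw [SimpleGraph.dist_ne_zero_iff_ne_and_reachable]
    exact ⟨hne, ⟨SimpleGraph.Walk.cons h1 (SimpleGraph.Walk.cons h2 SimpleGraph.Walk.nil)⟩⟩
  have h1' : G.dist u v ≠ 1 := fun h => hnadj (SimpleGraph.dist_eq_one_iff_adj.mp h)
  omega

lemma dist_eq_three' {w1 w2 : V} (hne : u ≠ v) (hnadj : ¬ G.Adj u v)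
    (hno : ∀ w, G.Adj u w → G.Adj w v → False)
    (h1 : G.Adj u w1) (h2 : G.Adj w1 w2) (h3 : G.Adj w2 v) : G.dist u v = 3 := by
  have hle := SimpleGraph.dist_le
    (SimpleGraph.Walk.cons h1 (SimpleGraph.Walk.cons h2 (SimpleGraph.Walk.cons h3 SimpleGraph.Walk.nil)))
  simp only [SimpleGraph.Walk.length_cons, SimpleGraph.Walk.length_nil] at hle
  have h0 : G.dist u v ≠ 0 := by
    rw [SimpleGraph.dist_ne_zero_iff_ne_and_reachable]
    exact ⟨hne, ⟨SimpleGraph.Walk.cons h1 (SimpleGraph.Walk.cons h2 (SimpleGraph.Walk.cons h3 SimpleGraph.Walk.nil))⟩⟩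
  have h1' : G.dist u v ≠ 1 := fun h => hnadj (SimpleGraph.dist_eq_one_iff_adj.mp h)
  have h2' : G.dist u v ≠ 2 := by
    intro hd
    obtain ⟨q, hq⟩ := SimpleGraph.exists_walk_of_dist_ne_zero (G := G) (u := u) (v := v) (by omega)
    rw [hd] at hq
    obtain ⟨w, a1, a2, -⟩ := walk_len2 q hq
    exact hno w a1 a2
  omega

lemma visible_of_walk (q : G.Walk u v) (hlen : q.length = G.dist u v)
    (hX : ∀ w ∈ q.support, w ∈ X → w = u ∨ w = v) : Visible G X u v :=
  ⟨q, ⟨q.isPath_of_length_eq_dist hlen, hlen⟩, hX⟩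

lemma visible_self : Visible G X u u := by
  refine visible_of_walk SimpleGraph.Walk.nil (by simp [SimpleGraph.dist_self]) ?_
  intro w hw _
  simp at hw
  exact Or.inl hw

lemma visible_adj (h : G.Adj u v) : Visible G X u v := by
  refine visible_of_walk (SimpleGraph.Walk.cons h SimpleGraph.Walk.nil)
    (by simp [SimpleGraph.dist_eq_one_iff_adj.mpr h]) ?_
  intro w hw _
  simp at hw
  rcases hw with h | h
  · exact Or.inl h
  · exact Or.inr h

lemma visible_two {w : V} (hd : G.dist u v = 2) (h1 : G.Adj u w) (h2 : G.Adj w v)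
    (hw : w ∉ X) : Visible G X u v := by
  refine visible_of_walk (SimpleGraph.Walk.cons h1 (SimpleGraph.Walk.cons h2 SimpleGraph.Walk.nil))
    (by simp [hd]) ?_
  intro x hx hxX
  simp at hx
  rcases hx with h | h | h
  · exact Or.inl h
  · exact absurd (h ▸ hxX) hw
  · exact Or.inr h

lemma visible_three {w1 w2 : V} (hd : G.dist u v = 3) (h1 : G.Adj u w1) (h2 : G.Adj w1 w2)
    (h3 : G.Adj w2 v) (hw1 : w1 ∉ X) (hw2 : w2 ∉ X) : Visible G X u v := by
  refine visible_of_walk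
    (SimpleGraph.Walk.cons h1 (SimpleGraph.Walk.cons h2 (SimpleGraph.Walk.cons h3 SimpleGraph.Walk.nil)))
    (by simp [hd]) ?_
  intro x hx hxX
  simp at hx
  rcases hx with h | h | h | h
  · exact Or.inl h
  · exact absurd (h ▸ hxX) hw1
  · exact absurd (h ▸ hxX) hw2
  · exact Or.inr h

end Aux

section SP2Aux

open SimpleGraph

variable {p : ℕ}

lemma adj_iff {a b c d : Fin p} :
    (SP2 p).Adj (a, b) (c, d) ↔ (a = c ∧ b ≠ d) ∨ (c = b ∧ d = a ∧ a ≠ b) :=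
  Iff.rfl

lemma dist2' {i j l : Fin p} (hij : i ≠ j) (hli : l ≠ i) :
    (SP2 p).dist (i, j) (j, l) = 2 := by
  have hnadj : ¬ (SP2 p).Adj (i, j) (j, l) := by
    rw [adj_iff]
    rintro (⟨h, -⟩ | ⟨-, h, -⟩)
    · exact hij h
    · exact hli h
  refine dist_eq_two' (w := (j, i)) ?_ hnadj ?_ ?_
  · intro h
    exact hij (congrArg Prod.fst h)
  · exact Or.inr ⟨rfl, rfl, hij⟩
  · exact Or.inl ⟨rfl, fun h => hli h.symm⟩

lemma no_common {i j k l : Fin p} (hik : i ≠ k) (hjk : j ≠ k) (hli : l ≠ i) :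
    ∀ w, (SP2 p).Adj (i, j) w → (SP2 p).Adj w (k, l) → False := by
  rintro ⟨a, b⟩ h1 h2
  rw [adj_iff] at h1 h2
  rcases h1 with ⟨h1a, h1b⟩ | ⟨h1a, h1b, h1c⟩ <;>
    rcases h2 with ⟨h2a, h2b⟩ | ⟨h2a, h2b, h2c⟩ <;> simp_all

lemma dist3' {i j k l : Fin p} (hik : i ≠ k) (hjk : j ≠ k) (hli : l ≠ i) :
    (SP2 p).dist (i, j) (k, l) = 3 := by
  have hnadj : ¬ (SP2 p).Adj (i, j) (k, l) := by
    rw [adj_iff]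
    rintro (⟨h, -⟩ | ⟨h, -⟩)
    · exact hik h
    · exact hjk h.symm
  refine dist_eq_three' (w1 := (i, k)) (w2 := (k, i)) ?_ hnadj (no_common hik hjk hli) ?_ ?_ ?_
  · intro h
    exact hik (congrArg Prod.fst h)
  · exact Or.inl ⟨rfl, hjk⟩
  · exact Or.inr ⟨rfl, rfl, hik⟩
  · exact Or.inl ⟨rfl, fun h => hli h.symm⟩

lemma mid2 {i j l : Fin p} (hij : i ≠ j) (hli : l ≠ i) {w : Fin p × Fin p}
    (h1 : (SP2 p).Adj (i, j) w) (h2 : (SP2 p).Adj w (j, l)) : w = (j, i) := by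
  obtain ⟨a, b⟩ := w
  rw [adj_iff] at h1 h2
  rcases h1 with ⟨h1a, h1b⟩ | ⟨h1a, h1b, h1c⟩ <;>
    rcases h2 with ⟨h2a, h2b⟩ | ⟨h2a, h2b, h2c⟩ <;> simp_all [Prod.ext_iff]

lemma mid3 {i j k l : Fin p} (hik : i ≠ k) (hjk : j ≠ k) (hli : l ≠ i) (hjl : j ≠ l)
    {w1 w2 : Fin p × Fin p} (h1 : (SP2 p).Adj (i, j) w1) (h2 : (SP2 p).Adj w1 w2)
    (h3 : (SP2 p).Adj w2 (k, l)) : w1 = (i, k) ∧ w2 = (k, i) := by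
  obtain ⟨a, b⟩ := w1
  obtain ⟨c, d⟩ := w2
  rw [adj_iff] at h1 h2 h3
  rcases h1 with ⟨h1a, h1b⟩ | ⟨h1a, h1b, h1c⟩ <;>
    rcases h2 with ⟨h2a, h2b⟩ | ⟨h2a, h2b, h2c⟩ <;>
      rcases h3 with ⟨h3a, h3b⟩ | ⟨h3a, h3b, h3c⟩ <;> simp_all [Prod.ext_iff]

end SP2Aux

section Main

open SimpleGraph

variable {p : ℕ}

lemma not_both2 {X : Set (Fin p × Fin p)} (hX : DualMVSet (SP2 p) X) {i j l : Fin p}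
    (hij : i ≠ j) (hli : l ≠ i) (hm : (j, i) ∈ X) : ((i, j) ∈ X ↔ (j, l) ∉ X) := by
  have hnv : ¬ Visible (SP2 p) X (i, j) (j, l) := by
    rintro ⟨q, ⟨-, hlen⟩, hsup⟩
    rw [dist2' hij hli] at hlen
    obtain ⟨w, a1, a2, hs⟩ := walk_len2 q hlen
    obtain rfl := mid2 hij hli a1 a2
    rcases hsup (j, i) (by rw [hs]; simp) hm with h | h
    · rw [Prod.mk.injEq] at h
      exact hij h.2
    · rw [Prod.mk.injEq] at h
      exact hli h.2.symm
  constructor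
  · intro h1 h2
    exact hnv (hX.1 _ h1 _ h2)
  · intro h1
    by_contra h2
    exact hnv (hX.2 _ h2 _ h1)

lemma not_both3 {X : Set (Fin p × Fin p)} (hX : DualMVSet (SP2 p) X) {i j k l : Fin p}
    (hik : i ≠ k) (hjk : j ≠ k) (hli : l ≠ i) (hjl : j ≠ l)
    (hm : (i, k) ∈ X ∨ (k, i) ∈ X) : ((i, j) ∈ X ↔ (k, l) ∉ X) := by
  have hnv : ¬ Visible (SP2 p) X (i, j) (k, l) := by
    rintro ⟨q, ⟨-, hlen⟩, hsup⟩
    rw [dist3' hik hjk hli] at hlen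
    obtain ⟨w1, w2, a1, a2, a3, hs⟩ := walk_len3 q hlen
    obtain ⟨rfl, rfl⟩ := mid3 hik hjk hli hjl a1 a2 a3
    rcases hm with hm | hm
    · rcases hsup (i, k) (by rw [hs]; simp) hm with h | h
      · rw [Prod.mk.injEq] at h
        exact hjk h.2.symm
      · rw [Prod.mk.injEq] at h
        exact hik h.1
    · rcases hsup (k, i) (by rw [hs]; simp) hm with h | h
      · rw [Prod.mk.injEq] at h
        exact hik h.1.symm
      · rw [Prod.mk.injEq] at h
        exact hli h.2.symm
  constructor
  · intro h1 h2
    exact hnv (hX.1 _ h1 _ h2)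
  · intro h1
    by_contra h2
    exact hnv (hX.2 _ h2 _ h1)

lemma visible_cross {X : Set (Fin p × Fin p)} {i j k l : Fin p} (hik : i ≠ k)
    (h1 : (i, k) ∉ X ∨ j = k) (h2 : (k, i) ∉ X ∨ l = i) :
    Visible (SP2 p) X (i, j) (k, l) := by
  by_cases hjk : j = k <;> by_cases hli : l = i
  · rw [hjk, hli]
    exact visible_adj (Or.inr ⟨rfl, rfl, hik⟩)
  · rw [hjk]
    have hik' : i ≠ k := hik
    exact visible_two (w := (k, i)) (dist2' hik' hli) (Or.inr ⟨rfl, rfl, hik'⟩)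
      (Or.inl ⟨rfl, fun h => hli h.symm⟩) (h2.resolve_right hli)
  · rw [hli]
    have hd : (SP2 p).dist (i, j) (k, i) = 2 := by
      rw [SimpleGraph.dist_comm]
      exact dist2' (Ne.symm hik) hjk
    exact visible_two (w := (i, k)) hd (Or.inl ⟨rfl, hjk⟩) (Or.inr ⟨rfl, rfl, hik⟩)
      (h1.resolve_right hjk)
  · exact visible_three (w1 := (i, k)) (w2 := (k, i)) (dist3' hik hjk hli)
      (Or.inl ⟨rfl, hjk⟩) (Or.inr ⟨rfl, rfl, hik⟩)
      (Or.inl ⟨rfl, fun h => hli h.symm⟩) (h1.resolve_right hjk) (h2.resolve_right hli)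

lemma dual_row (i : Fin p) : DualMVSet (SP2 p) {v : Fin p × Fin p | v.1 = i} := by
  constructor
  · rintro ⟨a, b⟩ ha ⟨c, d⟩ hc
    simp only [Set.mem_setOf_eq] at ha hc
    obtain rfl : a = c := ha.trans hc.symm
    by_cases hbd : b = d
    · subst hbd; exact visible_self
    · exact visible_adj (Or.inl ⟨rfl, hbd⟩)
  · rintro ⟨a, b⟩ ha ⟨c, d⟩ hc
    simp only [Set.mem_setOf_eq] at ha hc
    by_cases hac : a = c
    · subst hac
      by_cases hbd : b = d
      · subst hbd; exact visible_self
      · exact visible_adj (Or.inl ⟨rfl, hbd⟩)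
    · exact visible_cross hac (Or.inl ha) (Or.inl hc)

lemma dual_diag : DualMVSet (SP2 p) {v : Fin p × Fin p | v.1 = v.2} := by
  constructor
  · rintro ⟨a, b⟩ ha ⟨c, d⟩ hc
    simp only [Set.mem_setOf_eq] at ha hc
    subst ha; subst hc
    by_cases hac : a = c
    · subst hac; exact visible_self
    · exact visible_cross hac (Or.inl hac) (Or.inl (Ne.symm hac))
  · rintro ⟨a, b⟩ ha ⟨c, d⟩ hc
    simp only [Set.mem_setOf_eq] at ha hc
    by_cases hac : a = c
    · subst hac
      by_cases hbd : b = d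
      · subst hbd; exact visible_self
      · exact visible_adj (Or.inl ⟨rfl, hbd⟩)
    · exact visible_cross hac (Or.inl hac) (Or.inl (Ne.symm hac))

lemma ncard_row (i : Fin p) : {v : Fin p × Fin p | v.1 = i}.ncard = p := by
  have himg : {v : Fin p × Fin p | v.1 = i} = (fun j => ((i, j) : Fin p × Fin p)) '' Set.univ := by
    ext ⟨a, b⟩
    simp only [Set.mem_setOf_eq, Set.image_univ, Set.mem_range, Prod.mk.injEq]
    constructor
    · rintro rfl; exact ⟨b, rfl, rfl⟩
    · rintro ⟨x, rfl, -⟩; rfl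
  rw [himg, Set.ncard_image_of_injective _ (fun x y h => by injection h), Set.ncard_univ]
  simp

lemma ncard_diag : {v : Fin p × Fin p | v.1 = v.2}.ncard = p := by
  have himg : {v : Fin p × Fin p | v.1 = v.2} = (fun a => ((a, a) : Fin p × Fin p)) '' Set.univ := by
    ext ⟨a, b⟩
    simp only [Set.mem_setOf_eq, Set.image_univ, Set.mem_range, Prod.mk.injEq]
    constructor
    · rintro rfl; exact ⟨a, rfl, rfl⟩
    · rintro ⟨x, rfl, rfl⟩; rfl
  rw [himg, Set.ncard_image_of_injective _ (fun x y h => by injection h), Set.ncard_univ]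
  simp

lemma exists_third (hp : 3 ≤ p) (k c : Fin p) : ∃ e : Fin p, e ≠ k ∧ e ≠ c := by
  by_contra h
  push_neg at h
  have hsub : (Finset.univ : Finset (Fin p)) ⊆ {k, c} := by
    intro e _
    simp only [Finset.mem_insert, Finset.mem_singleton]
    by_cases he : e = k
    · exact Or.inl he
    · exact Or.inr (h e he)
  have := Finset.card_le_card hsub
  have hcard : ({k, c} : Finset (Fin p)).card ≤ 2 := Finset.card_insert_le _ _ |>.trans (by simp)
  simp only [Finset.card_univ, Fintype.card_fin] at this
  omega

lemma classify (hp : 3 ≤ p) {X : Set (Fin p × Fin p)} (hX : DualMVSet (SP2 p) X) :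
    (∃ i : Fin p, X = {v : Fin p × Fin p | v.1 = i}) ∨ X ⊆ {v : Fin p × Fin p | v.1 = v.2} := by
  by_cases hoff : ∃ v ∈ X, v.1 ≠ v.2
  · obtain ⟨⟨a, b⟩, habX, hab⟩ := hoff
    simp only at hab
    left
    refine ⟨a, ?_⟩
    have hba : (b, a) ∉ X := by
      intro hbaX
      have h1 : (a, a) ∉ X := (not_both2 hX (Ne.symm hab) hab habX).mp hbaX
      have h2 : (b, b) ∉ X := (not_both2 hX hab (Ne.symm hab) hbaX).mp habX
      exact h1 ((not_both3 hX hab hab (Ne.symm hab) hab (Or.inl habX)).mpr h2)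
    have hblock : ∀ l, (a, l) ∈ X := by
      intro l
      by_cases hl : l = b
      · subst hl; exact habX
      · by_contra h
        exact hba ((not_both2 hX (Ne.symm hab) hl habX).mpr h)
    ext ⟨k, c⟩
    simp only [Set.mem_setOf_eq]
    constructor
    · intro hkc
      by_contra hk
      by_cases hc : c = a
      · subst hc
        exact (not_both2 hX hk (fun h => hk h.symm) (hblock k)).mp hkc (hblock c)
      · obtain ⟨e, hek, hec⟩ := exists_third hp k c
        exact (not_both3 hX (fun h => hk h.symm) hek hc hec (Or.inl (hblock k))).mp
          (hblock e) hkc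
    · rintro rfl
      exact hblock c
  · right
    intro v hv
    simp only [Set.mem_setOf_eq]
    by_contra h
    exact hoff ⟨v, hv, h⟩

end Main

section Final

open SimpleGraph

variable {p : ℕ}

lemma ncard_le_p (hp : 3 ≤ p) {X : Set (Fin p × Fin p)} (hX : DualMVSet (SP2 p) X) :
    X.ncard ≤ p := by
  rcases classify hp hX with ⟨i, rfl⟩ | hsub
  · exact (ncard_row i).le
  · calc X.ncard ≤ {v : Fin p × Fin p | v.1 = v.2}.ncard :=
        Set.ncard_le_ncard hsub (Set.toFinite _)
    _ = p := ncard_diag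

end Final


/-- `μ_d(S_p^2) = p`, and the maximum dual mutual-visibility sets are exactly the
`p` rows `iS_p^1` and the diagonal. -/
theorem stmt_8 (p : ℕ) (hp : 3 ≤ p) :
    maxCard (DualMVSet (SP2 p)) = p ∧
    {X : Set (Fin p × Fin p) | DualMVSet (SP2 p) X ∧ X.ncard = p} =
      {X : Set (Fin p × Fin p) |
        (∃ i : Fin p, X = {v : Fin p × Fin p | v.1 = i}) ∨
        X = {v : Fin p × Fin p | v.1 = v.2}} := by
  have hmem : (p : ℕ) ∈ {n : ℕ | ∃ X : Set (Fin p × Fin p), DualMVSet (SP2 p) X ∧ X.ncard = n} :=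
    ⟨{v : Fin p × Fin p | v.1 = (⟨0, by omega⟩ : Fin p)}, dual_row _, ncard_row _⟩
  have hbdd : ∀ n ∈ {n : ℕ | ∃ X : Set (Fin p × Fin p), DualMVSet (SP2 p) X ∧ X.ncard = n},
      n ≤ p := by
    rintro n ⟨X, hX, rfl⟩
    exact ncard_le_p hp hX
  have hmax : maxCard (DualMVSet (SP2 p)) = p := by
    refine le_antisymm (csSup_le ⟨p, hmem⟩ hbdd) (le_csSup ⟨p, fun n hn => hbdd n hn⟩ hmem)
  refine ⟨hmax, ?_⟩
  ext X
  simp only [Set.mem_setOf_eq]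
  constructor
  · rintro ⟨hX, hcard⟩
    rcases classify hp hX with ⟨i, rfl⟩ | hsub
    · exact Or.inl ⟨i, rfl⟩
    · refine Or.inr (Set.eq_of_subset_of_ncard_le hsub ?_ (Set.toFinite _))
      rw [ncard_diag, hcard]
  · rintro (⟨i, rfl⟩ | rfl)
    · exact ⟨dual_row i, ncard_row i⟩
    · exact ⟨dual_diag, ncard_diag⟩
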